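/- Poisson limit theorem: for fixed μ > 0 and fixed natural number x, the binomial probability B(x; n, μ/n) = C(n,x) (μ/n)^x (1 - μ/n)^{n-x} tends to μ^x e^{-μ} / x! as n → ∞. -/
import Mathlib

open Filter

theorem poisson_limit_theorem (μ : ℝ) (hμ : 0 < μ) (x : ℕ) :
    Tendsto (fun n : ℕ =>
        (n.choose x : ℝ) * (μ / n) ^ x * (1 - μ / n) ^ (n - x))
      atTop (nhds (μ ^ x * Real.exp (-μ) / x.factorial)) := by
  have hlim : Tendsto (fun n : ℕ =>
      (μ ^ x / x.factorial * ∏ i ∈ Finset.range x, (1 - (i : ℝ) / n)) *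
        ((1 - μ / n) ^ n / (1 - μ / n) ^ x)) atTop
      (nhds (μ ^ x * Real.exp (-μ) / x.factorial)) := by
    have h1 : Tendsto (fun n : ℕ => (1 - μ / n)) atTop (nhds 1) := by
      have := (tendsto_const_nhds (α := ℕ) (f := atTop) (x := μ)).div_atTop
        tendsto_natCast_atTop_atTop
      simpa using (tendsto_const_nhds (x := (1:ℝ))).sub this
    have hprod : Tendsto (fun n : ℕ => ∏ i ∈ Finset.range x, (1 - (i : ℝ) / n))
        atTop (nhds 1) := by
      have : Tendsto (fun n : ℕ => ∏ i ∈ Finset.range x, (1 - (i : ℝ) / n))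
          atTop (nhds (∏ i ∈ Finset.range x, (1:ℝ))) := by
        apply tendsto_finset_prod
        intro i _
        have := (tendsto_const_nhds (α := ℕ) (f := atTop) (x := (i:ℝ))).div_atTop
          tendsto_natCast_atTop_atTop
        simpa using (tendsto_const_nhds (x := (1:ℝ))).sub this
      simpa using this
    have hexp : Tendsto (fun n : ℕ => (1 - μ / n) ^ n) atTop (nhds (Real.exp (-μ))) := by
      have := Real.tendsto_one_add_div_pow_exp (-μ)
      simpa [sub_eq_add_neg, neg_div] using this
    have hpow : Tendsto (fun n : ℕ => (1 - μ / n) ^ x) atTop (nhds 1) := by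
      simpa using h1.pow x
    have := ((tendsto_const_nhds (x := μ ^ x / (x.factorial : ℝ))).mul hprod).mul
      (hexp.div hpow one_ne_zero)
    simpa [mul_comm, mul_assoc, mul_left_comm, div_eq_mul_inv] using this
  apply hlim.congr'
  filter_upwards [eventually_ge_atTop x, eventually_gt_atTop ⌈μ⌉₊] with n hnx hnμ
  have hn0 : (0:ℝ) < n := lt_of_le_of_lt (Nat.cast_nonneg _) (by exact_mod_cast hnμ)
  have hμn : μ / n < 1 := by
    rw [div_lt_one hn0]
    calc μ ≤ ⌈μ⌉₊ := Nat.le_ceil μ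
    _ < n := by exact_mod_cast hnμ
  have h1μ : (0:ℝ) < 1 - μ / n := by linarith
  -- choose part
  have hchoose : (n.choose x : ℝ) = (∏ i ∈ Finset.range x, ((n : ℝ) - i)) / x.factorial := by
    have := Nat.descFactorial_eq_factorial_mul_choose n x
    rw [Nat.descFactorial_eq_prod_range] at this
    have hcast : ((∏ i ∈ Finset.range x, (n - i) : ℕ) : ℝ) =
        ∏ i ∈ Finset.range x, ((n : ℝ) - i) := by
      push_cast [Finset.prod_congr rfl]
      refine Finset.prod_congr rfl fun i hi => ?_
      have : i ≤ n := le_trans (Finset.mem_range.mp hi).le hnx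
      push_cast [this]
      ring
    field_simp
    rw [← hcast, this]
    push_cast
    ring
  have hpowsub : (1 - μ / n) ^ (n - x) = (1 - μ / n) ^ n / (1 - μ / n) ^ x := by
    rw [eq_div_iff (pow_ne_zero _ h1μ.ne'), ← pow_add, Nat.sub_add_cancel hnx]
  rw [hchoose, hpowsub, div_pow]
  have hprodeq : ∏ i ∈ Finset.range x, (1 - (i : ℝ) / n) =
      (∏ i ∈ Finset.range x, ((n : ℝ) - i)) / n ^ x := by
    rw [eq_div_iff (pow_ne_zero _ hn0.ne')]
    have : ((n:ℝ)) ^ x = ∏ _i ∈ Finset.range x, (n:ℝ) := by simp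
    rw [this, ← Finset.prod_mul_distrib]
    refine Finset.prod_congr rfl fun i _ => ?_
    field_simp
  rw [hprodeq]
  ring
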